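/- Let S be a symmetric positive definite p×p real matrix, m = p(p−1)/2, and λ ∈ ℝ^m with λ_1 ≥ ⋯ ≥ λ_m > 0. For a symmetric p×p matrix U define J^D_λ(U) = sup{ tr(UΘ) : Θ symmetric p×p, J_λ(Θ) ≤ 1 } ∈ [0,∞]. Then the primal Gslope optimal value and the dual optimal value satisfy sup{ logdet Θ − tr(ΘS) − J_λ(Θ) : Θ symmetric positive definite } = −p − sup{ logdet W : W symmetric positive definite, J^D_λ(W − S) ≤ 1 }. -/

import Mathlib

/-- The sorted-ℓ1 (SLOPE) norm of the vector of upper-triangular off-diagonal entries of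
a `p×p` matrix `Θ`, with weight vector `λ` of length `m = p(p−1)/2`: for `λ`
nonincreasing and nonnegative this equals (by the rearrangement inequality) the maximum
over all enumerations of the upper-triangular pairs of `Σ_k λ_k |Θ_(i_k,j_k)|`. -/
noncomputable def slopeNormMat {p : ℕ} (lam : Fin (p * (p - 1) / 2) → ℝ)
    (Θ : Matrix (Fin p) (Fin p) ℝ) : ℝ :=
  ⨆ f : Fin (p * (p - 1) / 2) ≃ {q : Fin p × Fin p // q.1 < q.2},
    ∑ k, lam k * |Θ (f k).val.1 (f k).val.2|

/-- The dual functional `J^D_λ(U) = sup { tr(U Θ) : Θ symmetric, J_λ(Θ) ≤ 1 } ∈ [0,∞]`,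
valued in the extended reals. -/
noncomputable def slopeDualNorm {p : ℕ} (lam : Fin (p * (p - 1) / 2) → ℝ)
    (U : Matrix (Fin p) (Fin p) ℝ) : EReal :=
  sSup {x : EReal | ∃ Θ : Matrix (Fin p) (Fin p) ℝ,
    Θ.IsSymm ∧ slopeNormMat lam Θ ≤ 1 ∧ x = ((U * Θ).trace : ℝ)}

open Matrix Finset

namespace GslopeAux

variable {p : ℕ}

def utEquivSigma (p : ℕ) : {q : Fin p × Fin p // q.1 < q.2} ≃ Σ j : Fin p, Fin j.val where
  toFun q := ⟨q.1.2, ⟨q.1.1.val, q.2⟩⟩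
  invFun x := ⟨(⟨x.2.val, x.2.isLt.trans x.1.isLt⟩, x.1), x.2.isLt⟩
  left_inv := by rintro ⟨⟨a, b⟩, h⟩; rfl
  right_inv := by rintro ⟨j, k⟩; rfl

lemma card_ut : Fintype.card {q : Fin p × Fin p // q.1 < q.2} = p * (p - 1) / 2 := by
  rw [Fintype.card_congr (utEquivSigma p), Fintype.card_sigma]
  simp only [Fintype.card_fin]
  rw [Fin.sum_univ_eq_sum_range (fun i => i) p, Finset.sum_range_id]

instance : Nonempty (Fin (p * (p - 1) / 2) ≃ {q : Fin p × Fin p // q.1 < q.2}) := by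
  apply Fintype.card_eq.mp
  simp [card_ut]

variable (lam : Fin (p * (p - 1) / 2) → ℝ) (Θ : Matrix (Fin p) (Fin p) ℝ)

lemma sum_le_slope (f : Fin (p * (p - 1) / 2) ≃ {q : Fin p × Fin p // q.1 < q.2}) :
    ∑ k, lam k * |Θ (f k).val.1 (f k).val.2| ≤ slopeNormMat lam Θ := by
  exact le_ciSup (f := fun f : Fin (p * (p - 1) / 2) ≃ {q : Fin p × Fin p // q.1 < q.2} =>
    ∑ k, lam k * |Θ (f k).val.1 (f k).val.2|) (Set.Finite.bddAbove (Set.finite_range _)) f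

lemma exists_slope_eq : ∃ f : Fin (p * (p - 1) / 2) ≃ {q : Fin p × Fin p // q.1 < q.2},
    slopeNormMat lam Θ = ∑ k, lam k * |Θ (f k).val.1 (f k).val.2| := by
  obtain ⟨f, hf⟩ := Finite.exists_max
    (fun f : Fin (p * (p - 1) / 2) ≃ {q : Fin p × Fin p // q.1 < q.2} =>
      ∑ k, lam k * |Θ (f k).val.1 (f k).val.2|)
  exact ⟨f, le_antisymm (ciSup_le hf) (sum_le_slope lam Θ f)⟩

lemma slope_nonneg (hpos : ∀ k, 0 < lam k) : 0 ≤ slopeNormMat lam Θ := by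
  have f := Classical.arbitrary (Fin (p * (p - 1) / 2) ≃ {q : Fin p × Fin p // q.1 < q.2})
  refine le_trans ?_ (sum_le_slope lam Θ f)
  exact Finset.sum_nonneg fun k _ => mul_nonneg (hpos k).le (abs_nonneg _)

lemma slope_smul {c : ℝ} (hc : 0 ≤ c) : slopeNormMat lam (c • Θ) = c * slopeNormMat lam Θ := by
  have key : ∀ f : Fin (p * (p - 1) / 2) ≃ {q : Fin p × Fin p // q.1 < q.2},
      ∑ k, lam k * |(c • Θ) (f k).val.1 (f k).val.2|
        = c * ∑ k, lam k * |Θ (f k).val.1 (f k).val.2| := by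
    intro f
    rw [Finset.mul_sum]
    refine Finset.sum_congr rfl fun k _ => ?_
    simp only [Matrix.smul_apply, smul_eq_mul, abs_mul, abs_of_nonneg hc]
    ring
  apply le_antisymm
  · apply ciSup_le
    intro f
    rw [key f]
    exact mul_le_mul_of_nonneg_left (sum_le_slope lam Θ f) hc
  · obtain ⟨f, hf⟩ := exists_slope_eq lam Θ
    rw [hf, ← key f]
    exact sum_le_slope lam _ f

lemma slope_eq_zero (h : ∀ i j : Fin p, i < j → Θ i j = 0) : slopeNormMat lam Θ = 0 := by
  have key : ∀ f : Fin (p * (p - 1) / 2) ≃ {q : Fin p × Fin p // q.1 < q.2},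
      ∑ k, lam k * |Θ (f k).val.1 (f k).val.2| = 0 := by
    intro f
    exact Finset.sum_eq_zero fun k _ => by rw [h _ _ (f k).2, abs_zero, mul_zero]
  obtain ⟨f, hf⟩ := exists_slope_eq lam Θ
  rw [hf, key f]

lemma offdiag_zero_of_slope_zero (hpos : ∀ k, 0 < lam k) (hJ : slopeNormMat lam Θ ≤ 0) :
    ∀ i j : Fin p, i < j → Θ i j = 0 := by
  intro i j hij
  have f := Classical.arbitrary (Fin (p * (p - 1) / 2) ≃ {q : Fin p × Fin p // q.1 < q.2})
  set q : {q : Fin p × Fin p // q.1 < q.2} := ⟨(i, j), hij⟩ with hq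
  have h1 : lam (f.symm q) * |Θ i j| ≤ ∑ k, lam k * |Θ (f k).val.1 (f k).val.2| := by
    have := Finset.single_le_sum
      (f := fun k => lam k * |Θ (f k).val.1 (f k).val.2|)
      (fun k _ => mul_nonneg (hpos k).le (abs_nonneg _)) (Finset.mem_univ (f.symm q))
    rwa [Equiv.apply_symm_apply] at this
  have h2 := (h1.trans (sum_le_slope lam Θ f)).trans hJ
  have h3 := hpos (f.symm q)
  have h4 := abs_nonneg (Θ i j)
  have : |Θ i j| = 0 := by nlinarith
  exact abs_eq_zero.mp this

lemma trace_le_slope (hpos : ∀ k, 0 < lam k) {U : Matrix (Fin p) (Fin p) ℝ}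
    (hΘs : Θ.IsSymm)
    (hU : ∀ T : Matrix (Fin p) (Fin p) ℝ, T.IsSymm → slopeNormMat lam T ≤ 1 →
      (U * T).trace ≤ 1) :
    (U * Θ).trace ≤ slopeNormMat lam Θ := by
  rcases (slope_nonneg lam Θ hpos).lt_or_eq with hc | hc
  · set c := slopeNormMat lam Θ with hcdef
    have h1 : slopeNormMat lam (c⁻¹ • Θ) = 1 := by
      rw [slope_smul lam Θ (inv_nonneg.mpr hc.le), inv_mul_cancel₀ hc.ne']
    have h2 := hU (c⁻¹ • Θ) (hΘs.smul _) (le_of_eq h1)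
    rw [Matrix.mul_smul, Matrix.trace_smul, smul_eq_mul] at h2
    have h3 := mul_le_mul_of_nonneg_left h2 hc.le
    rw [mul_one, ← mul_assoc, mul_inv_cancel₀ hc.ne', one_mul] at h3
    exact h3
  · have hz : ∀ i j : Fin p, i < j → Θ i j = 0 :=
      offdiag_zero_of_slope_zero lam Θ hpos (le_of_eq hc.symm)
    have key : ∀ t : ℝ, t * (U * Θ).trace ≤ 1 := by
      intro t
      have hs : slopeNormMat lam (t • Θ) = 0 := by
        apply slope_eq_zero
        intro i j hij
        simp [Matrix.smul_apply, hz i j hij]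
      have := hU (t • Θ) (hΘs.smul t) (by rw [hs]; norm_num)
      rwa [Matrix.mul_smul, Matrix.trace_smul, smul_eq_mul] at this
    rw [← hc]
    by_contra hlt
    push_neg at hlt
    have := key (2 / (U * Θ).trace)
    rw [div_mul_cancel₀ _ hlt.ne'] at this
    norm_num at this

lemma dualNorm_le_one_iff (U : Matrix (Fin p) (Fin p) ℝ) :
    slopeDualNorm lam U ≤ 1 ↔
      ∀ T : Matrix (Fin p) (Fin p) ℝ, T.IsSymm → slopeNormMat lam T ≤ 1 →
        (U * T).trace ≤ 1 := by
  constructor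
  · intro h T hTs hT1
    unfold slopeDualNorm at h
    have hmem : (((U * T).trace : ℝ) : EReal) ∈ {x : EReal | ∃ Θ : Matrix (Fin p) (Fin p) ℝ,
        Θ.IsSymm ∧ slopeNormMat lam Θ ≤ 1 ∧ x = ((U * Θ).trace : ℝ)} := ⟨T, hTs, hT1, rfl⟩
    have hx : (((U * T).trace : ℝ) : EReal) ≤ (1 : EReal) := le_trans (le_sSup hmem) h
    exact_mod_cast hx
  · intro h
    unfold slopeDualNorm
    apply sSup_le
    rintro x ⟨T, hTs, hT1, rfl⟩
    exact_mod_cast h T hTs hT1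

lemma trace_mul_eq_sum (A B : Matrix (Fin p) (Fin p) ℝ) :
    (A * B).trace = ∑ x : Fin p × Fin p, A x.1 x.2 * B x.2 x.1 := by
  rw [Fintype.sum_prod_type]
  simp [Matrix.trace, Matrix.diag, Matrix.mul_apply]

lemma trace_mul_offdiag {A B : Matrix (Fin p) (Fin p) ℝ} (hAs : A.IsSymm)
    (hA0 : ∀ i, A i i = 0) (hBs : B.IsSymm) :
    (A * B).trace = ∑ q : {q : Fin p × Fin p // q.1 < q.2},
      2 * (A q.val.1 q.val.2 * B q.val.1 q.val.2) := by
  have hg : ∀ x : Fin p × Fin p, A x.1 x.2 * B x.2 x.1 = A x.1 x.2 * B x.1 x.2 := by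
    intro x; rw [hBs.apply]
  rw [trace_mul_eq_sum]
  simp_rw [hg]
  set g : Fin p × Fin p → ℝ := fun x => A x.1 x.2 * B x.1 x.2 with hgdef
  have h1 : ∑ x : Fin p × Fin p, g x
      = ∑ x ∈ Finset.univ.filter (fun x : Fin p × Fin p => x.1 < x.2), g x
        + ∑ x ∈ Finset.univ.filter (fun x : Fin p × Fin p => ¬ x.1 < x.2), g x :=
    (Finset.sum_filter_add_sum_filter_not _ _ _).symm
  have h2 : ∑ x ∈ Finset.univ.filter (fun x : Fin p × Fin p => x.2 < x.1), g x
      = ∑ x ∈ Finset.univ.filter (fun x : Fin p × Fin p => ¬ x.1 < x.2), g x := by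
    apply Finset.sum_subset
    · intro x hx
      simp only [Finset.mem_filter, Finset.mem_univ, true_and] at hx ⊢
      exact asymm hx
    · intro x hx hx2
      simp only [Finset.mem_filter, Finset.mem_univ, true_and] at hx hx2
      have : x.1 = x.2 := le_antisymm (not_lt.mp hx2) (not_lt.mp hx)
      have hx1 : g x = A x.1 x.2 * B x.1 x.2 := rfl
      rw [hx1, ← this, hA0, zero_mul]
  have h3 : ∑ x ∈ Finset.univ.filter (fun x : Fin p × Fin p => x.2 < x.1), g x
      = ∑ x ∈ Finset.univ.filter (fun x : Fin p × Fin p => x.1 < x.2), g x := by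
    apply Finset.sum_bij' (fun x _ => Prod.swap x) (fun x _ => Prod.swap x)
    · intro x hx
      simp only [Finset.mem_filter, Finset.mem_univ, true_and] at hx ⊢
      exact hx
    · intro x hx
      simp only [Finset.mem_filter, Finset.mem_univ, true_and] at hx ⊢
      exact hx
    · intro x _; exact Prod.swap_swap x
    · intro x _; exact Prod.swap_swap x
    · intro x hx
      show g x = g x.swap
      simp only [hgdef, Prod.fst_swap, Prod.snd_swap]
      rw [hAs.apply, hBs.apply]
  have h4 : ∑ x ∈ Finset.univ.filter (fun x : Fin p × Fin p => x.1 < x.2), g x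
      = ∑ q : {q : Fin p × Fin p // q.1 < q.2}, g q.val :=
    Finset.sum_subtype _ (by simp) g
  rw [h1, ← h2, h3, h4]
  have : ∀ q : {q : Fin p × Fin p // q.1 < q.2},
      2 * (A q.val.1 q.val.2 * B q.val.1 q.val.2) = g q.val + g q.val := by
    intro q; simp only [hgdef]; ring
  simp_rw [this]
  rw [Finset.sum_add_distrib]

lemma trace_mul_diag_single (U : Matrix (Fin p) (Fin p) ℝ) (i : Fin p) (t : ℝ) :
    (U * Matrix.diagonal (Pi.single i t)).trace = U i i * t := by
  simp only [Matrix.trace, Matrix.diag, Matrix.mul_diagonal]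
  rw [Finset.sum_eq_single i]
  · simp
  · intro b _ hb; simp [Pi.single_apply, hb]
  · intro h; exact absurd (Finset.mem_univ i) h

lemma isSymm_of_isHermitian {A : Matrix (Fin p) (Fin p) ℝ} (h : A.IsHermitian) : A.IsSymm := by
  rwa [Matrix.IsHermitian, Matrix.conjTranspose_eq_transpose_of_trivial] at h

lemma isHermitian_of_isSymm {A : Matrix (Fin p) (Fin p) ℝ} (h : A.IsSymm) : A.IsHermitian := by
  rwa [Matrix.IsHermitian, Matrix.conjTranspose_eq_transpose_of_trivial]

lemma dot_conj (R A : Matrix (Fin p) (Fin p) ℝ) (hR : R.IsSymm) (x : Fin p → ℝ) :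
    x ⬝ᵥ ((R * A * R) *ᵥ x) = (R *ᵥ x) ⬝ᵥ (A *ᵥ (R *ᵥ x)) := by
  rw [← Matrix.mulVec_mulVec, ← Matrix.mulVec_mulVec, Matrix.dotProduct_mulVec x R]
  congr 1
  nth_rewrite 1 [← hR.eq]
  rw [Matrix.vecMul_transpose]

lemma dot_self_pos {x : Fin p → ℝ} (hx : x ≠ 0) : 0 < x ⬝ᵥ x := by
  have h1 : 0 ≤ x ⬝ᵥ x := Finset.sum_nonneg fun i _ => mul_self_nonneg (x i)
  rcases h1.lt_or_eq with h | h
  · exact h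
  · exact absurd (dotProduct_self_eq_zero.mp h.symm) hx

lemma mulVec_ne_zero {R : Matrix (Fin p) (Fin p) ℝ} (hR : R.det ≠ 0) {x : Fin p → ℝ}
    (hx : x ≠ 0) : R *ᵥ x ≠ 0 := by
  intro h
  apply hx
  have := congrArg (fun y => R⁻¹ *ᵥ y) h
  simpa [Matrix.mulVec_mulVec, Matrix.nonsing_inv_mul R (isUnit_iff_ne_zero.mpr hR)] using this

open scoped MatrixOrder in
lemma posdef_of_psd_det {W : Matrix (Fin p) (Fin p) ℝ} (hW : W.PosSemidef)
    (hd : W.det ≠ 0) : W.PosDef := by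
  set R := CFC.sqrt W with hRdef
  have hRR : R * R = W := CFC.sqrt_mul_sqrt_self W hW.nonneg
  have hRs : R.IsSymm := isSymm_of_isHermitian (CFC.sqrt_nonneg W).posSemidef.1
  have hRdet : R.det ≠ 0 := by
    intro h
    apply hd
    rw [← hRR, Matrix.det_mul, h, mul_zero]
  refine Matrix.PosDef.of_dotProduct_mulVec_pos hW.1 fun x hx => ?_
  have hsx : star x = x := by simp
  rw [hsx, ← hRR]
  have h1 : R * R = R * 1 * R := by rw [Matrix.mul_one]
  rw [h1, dot_conj R 1 hRs x, Matrix.one_mulVec]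
  exact dot_self_pos (mulVec_ne_zero hRdet hx)

lemma posdef_conj {T R : Matrix (Fin p) (Fin p) ℝ} (hT : T.PosDef) (hR : R.IsSymm)
    (hRdet : R.det ≠ 0) : (R * T * R).PosDef := by
  refine Matrix.PosDef.of_dotProduct_mulVec_pos ?_ ?_
  · apply isHermitian_of_isSymm
    apply Matrix.IsSymm.ext
    intro i j
    have hTs : T.IsSymm := isSymm_of_isHermitian hT.1
    have : (R * T * R)ᵀ = R * T * R := by
      rw [Matrix.transpose_mul, Matrix.transpose_mul, hR.eq, hTs.eq, Matrix.mul_assoc]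
    exact congrFun (congrFun this i) j
  · intro x hx
    have hsx : star x = x := by simp
    rw [hsx, dot_conj R T hR x]
    have := hT.dotProduct_mulVec_pos (mulVec_ne_zero hRdet hx)
    simpa using this

lemma trace_eq_sum_eig {A : Matrix (Fin p) (Fin p) ℝ} (hA : A.IsHermitian) :
    A.trace = ∑ i, hA.eigenvalues i := by
  nth_rewrite 1 [hA.spectral_theorem]
  rw [Unitary.conjStarAlgAut_apply, Matrix.trace_mul_cycle]
  rw [Unitary.coe_star_mul_self]
  rw [Matrix.one_mul, Matrix.trace_diagonal]
  simp

lemma log_det_le {A : Matrix (Fin p) (Fin p) ℝ} (hA : A.PosDef) :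
    Real.log A.det ≤ A.trace - p := by
  have hH := hA.1
  rw [hH.det_eq_prod_eigenvalues, trace_eq_sum_eig hH]
  simp only [RCLike.ofReal_real_eq_id, id_eq]
  rw [Real.log_prod (fun i _ => (hA.eigenvalues_pos i).ne')]
  have h1 : ∀ i ∈ Finset.univ, Real.log (hH.eigenvalues i) ≤ hH.eigenvalues i - 1 :=
    fun i _ => Real.log_le_sub_one_of_pos (hA.eigenvalues_pos i)
  calc ∑ i, Real.log (hH.eigenvalues i) ≤ ∑ i, (hH.eigenvalues i - 1) :=
        Finset.sum_le_sum h1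
    _ = (∑ i, hH.eigenvalues i) - p := by
        rw [Finset.sum_sub_distrib]
        simp

open scoped MatrixOrder in
lemma logdet_pair {T W : Matrix (Fin p) (Fin p) ℝ} (hT : T.PosDef) (hW : W.PosDef) :
    Real.log T.det + Real.log W.det ≤ (T * W).trace - p := by
  set R := CFC.sqrt W with hRdef
  have hRR : R * R = W := CFC.sqrt_mul_sqrt_self W hW.posSemidef.nonneg
  have hRs : R.IsSymm := isSymm_of_isHermitian (CFC.sqrt_nonneg W).posSemidef.1
  have hRdet : R.det ≠ 0 := by
    intro h
    have := hW.det_pos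
    rw [← hRR, Matrix.det_mul, h, mul_zero] at this
    exact lt_irrefl _ this
  have hA' : (R * T * R).PosDef := posdef_conj hT hRs hRdet
  have h1 := log_det_le hA'
  have hdet : (R * T * R).det = T.det * W.det := by
    rw [Matrix.det_mul, Matrix.det_mul, ← hRR, Matrix.det_mul]
    ring
  have htr : (R * T * R).trace = (T * W).trace := by
    rw [Matrix.trace_mul_cycle, hRR, Matrix.trace_mul_comm]
  rw [hdet, htr, Real.log_mul hT.det_pos.ne' hW.det_pos.ne'] at h1
  exact h1

open scoped MatrixOrder in
lemma posdef_perturb {W : Matrix (Fin p) (Fin p) ℝ} (hW : W.PosDef) (hWs : W.IsSymm)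
    (M : Matrix (Fin p) (Fin p) ℝ) (hMs : M.IsSymm) :
    ∃ δ > 0, ∀ t : ℝ, |t| < δ → (W + t • M).PosDef := by
  set R := CFC.sqrt W with hRdef
  have hRR : R * R = W := CFC.sqrt_mul_sqrt_self W hW.posSemidef.nonneg
  have hRs : R.IsSymm := isSymm_of_isHermitian (CFC.sqrt_nonneg W).posSemidef.1
  have hRdet : R.det ≠ 0 := by
    intro h
    have := hW.det_pos
    rw [← hRR, Matrix.det_mul, h, mul_zero] at this
    exact lt_irrefl _ this
  have hRu : IsUnit R.det := isUnit_iff_ne_zero.mpr hRdet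
  set N := R⁻¹ * M * R⁻¹ with hNdef
  set CN : ℝ := ∑ i, ∑ j, |N i j| with hCNdef
  have hCN0 : 0 ≤ CN :=
    Finset.sum_nonneg fun i _ => Finset.sum_nonneg fun j _ => abs_nonneg _
  refine ⟨1 / (CN + 1), by positivity, fun t ht => ?_⟩
  have hRNR : R * N * R = M := by
    have h1 : R * N = M * R⁻¹ := by
      rw [hNdef, Matrix.mul_assoc R⁻¹ M R⁻¹]
      exact Matrix.mul_nonsing_inv_cancel_left R _ hRu
    rw [h1]
    exact Matrix.nonsing_inv_mul_cancel_right R M hRu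
  have hid : W + t • M = R * (1 + t • N) * R := by
    rw [Matrix.mul_add, Matrix.mul_one, Matrix.mul_smul, Matrix.add_mul, Matrix.smul_mul,
      hRR, hRNR]
  have ht' : |t| * (CN + 1) < 1 := by
    rw [← lt_div_iff₀ (by positivity)]
    exact ht
  have hone : ∀ x : Fin p → ℝ, x ≠ 0 → 0 < x ⬝ᵥ ((1 + t • N) *ᵥ x) := by
    intro x hx
    have hS : 0 < x ⬝ᵥ x := dot_self_pos hx
    have hquad : x ⬝ᵥ ((1 + t • N) *ᵥ x) = x ⬝ᵥ x + t * (x ⬝ᵥ (N *ᵥ x)) := by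
      rw [Matrix.add_mulVec, Matrix.one_mulVec, Matrix.smul_mulVec,
        dotProduct_add, dotProduct_smul, smul_eq_mul]
    have hxx : ∀ i : Fin p, x i * x i ≤ x ⬝ᵥ x := by
      intro i
      exact Finset.single_le_sum (f := fun k => x k * x k)
        (fun k _ => mul_self_nonneg (x k)) (Finset.mem_univ i)
    have hbound : |x ⬝ᵥ (N *ᵥ x)| ≤ CN * (x ⬝ᵥ x) := by
      have expand : x ⬝ᵥ (N *ᵥ x) = ∑ i, ∑ j, x i * (N i j * x j) := by
        simp [dotProduct, Matrix.mulVec, Finset.mul_sum]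
      rw [expand]
      calc |∑ i, ∑ j, x i * (N i j * x j)| ≤ ∑ i, |∑ j, x i * (N i j * x j)| :=
            Finset.abs_sum_le_sum_abs _ _
        _ ≤ ∑ i, ∑ j, |x i * (N i j * x j)| :=
            Finset.sum_le_sum fun i _ => Finset.abs_sum_le_sum_abs _ _
        _ ≤ ∑ i, ∑ j, |N i j| * (x ⬝ᵥ x) := by
            apply Finset.sum_le_sum; intro i _
            apply Finset.sum_le_sum; intro j _
            have heq : |x i * (N i j * x j)| = |N i j| * (|x i| * |x j|) := by
              rw [abs_mul, abs_mul]; ring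
            rw [heq]
            apply mul_le_mul_of_nonneg_left _ (abs_nonneg _)
            have h1 := hxx i
            have h2 := hxx j
            nlinarith [abs_nonneg (x i), abs_nonneg (x j), sq_abs (x i), sq_abs (x j),
              abs_nonneg (x i * x j)]
        _ = CN * (x ⬝ᵥ x) := by
            rw [hCNdef, Finset.sum_mul]
            exact Finset.sum_congr rfl fun i _ => (Finset.sum_mul _ _ _).symm
    rw [hquad]
    have h6 : -(|t| * |x ⬝ᵥ (N *ᵥ x)|) ≤ t * (x ⬝ᵥ (N *ᵥ x)) := by
      rw [← abs_mul]
      exact neg_abs_le _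
    nlinarith [mul_le_mul_of_nonneg_left hbound (abs_nonneg t), abs_nonneg t,
      mul_nonneg (abs_nonneg t) hCN0]
  refine Matrix.PosDef.of_dotProduct_mulVec_pos ?_ ?_
  · exact isHermitian_of_isSymm (hWs.add (hMs.smul t))
  · intro x hx
    have hsx : star x = x := by simp
    rw [hsx, hid, dot_conj _ _ hRs]
    exact hone (R *ᵥ x) (mulVec_ne_zero hRdet hx)

lemma sign_mul_le_abs (x y : ℝ) : Real.sign x * y ≤ |y| := by
  rcases Real.sign_apply_eq x with h | h | h <;> rw [h]
  · rw [neg_one_mul]; exact neg_le_abs y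
  · rw [zero_mul]; exact abs_nonneg y
  · rw [one_mul]; exact le_abs_self y

lemma sign_mul_self_eq (x : ℝ) : Real.sign x * x = |x| := by
  rcases lt_trichotomy x 0 with h | h | h
  · rw [Real.sign_of_neg h, abs_of_neg h]; ring
  · rw [h, Real.sign_zero, abs_zero, mul_zero]
  · rw [Real.sign_of_pos h, abs_of_pos h, one_mul]

noncomputable def dualCert (lam : Fin (p * (p - 1) / 2) → ℝ) (T : Matrix (Fin p) (Fin p) ℝ)
    (f : Fin (p * (p - 1) / 2) ≃ {q : Fin p × Fin p // q.1 < q.2}) :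
    Matrix (Fin p) (Fin p) ℝ :=
  Matrix.of fun i j =>
    if h : i < j then lam (f.symm ⟨(i, j), h⟩) * Real.sign (T i j) / 2
    else if h' : j < i then lam (f.symm ⟨(j, i), h'⟩) * Real.sign (T j i) / 2
    else 0

variable {T : Matrix (Fin p) (Fin p) ℝ}
  {f : Fin (p * (p - 1) / 2) ≃ {q : Fin p × Fin p // q.1 < q.2}}

lemma dualCert_apply_lt {i j : Fin p} (h : i < j) :
    dualCert lam T f i j = lam (f.symm ⟨(i, j), h⟩) * Real.sign (T i j) / 2 := by
  simp only [dualCert, Matrix.of_apply, dif_pos h]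

lemma dualCert_diag (i : Fin p) : dualCert lam T f i i = 0 := by
  simp only [dualCert, Matrix.of_apply, dif_neg (lt_irrefl i)]

lemma dualCert_symm : (dualCert lam T f).IsSymm := by
  apply Matrix.IsSymm.ext
  intro i j
  rcases lt_trichotomy i j with h | h | h
  · simp only [dualCert, Matrix.of_apply, dif_pos h, dif_neg (asymm h)]
  · subst h; rfl
  · simp only [dualCert, Matrix.of_apply, dif_pos h, dif_neg (asymm h)]

lemma dualCert_trace (B : Matrix (Fin p) (Fin p) ℝ) (hBs : B.IsSymm) :
    ((dualCert lam T f) * B).trace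
      = ∑ q : {q : Fin p × Fin p // q.1 < q.2},
          lam (f.symm q) * (Real.sign (T q.val.1 q.val.2) * B q.val.1 q.val.2) := by
  rw [trace_mul_offdiag (dualCert_symm lam) (dualCert_diag lam) hBs]
  refine Finset.sum_congr rfl fun q _ => ?_
  have hq : dualCert lam T f q.val.1 q.val.2
      = lam (f.symm q) * Real.sign (T q.val.1 q.val.2) / 2 := dualCert_apply_lt lam q.2
  rw [hq]
  ring

lemma dualCert_trace_le (hpos : ∀ k, 0 < lam k) (B : Matrix (Fin p) (Fin p) ℝ)
    (hBs : B.IsSymm) : ((dualCert lam T f) * B).trace ≤ slopeNormMat lam B := by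
  rw [dualCert_trace lam B hBs]
  have step1 : ∑ q : {q : Fin p × Fin p // q.1 < q.2},
        lam (f.symm q) * (Real.sign (T q.val.1 q.val.2) * B q.val.1 q.val.2)
      ≤ ∑ q : {q : Fin p × Fin p // q.1 < q.2}, lam (f.symm q) * |B q.val.1 q.val.2| := by
    refine Finset.sum_le_sum fun q _ => ?_
    exact mul_le_mul_of_nonneg_left (sign_mul_le_abs _ _) (hpos _).le
  refine step1.trans ?_
  have step2 : ∑ q : {q : Fin p × Fin p // q.1 < q.2}, lam (f.symm q) * |B q.val.1 q.val.2|
      = ∑ k, lam k * |B (f k).val.1 (f k).val.2| := by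
    rw [← Equiv.sum_comp f (fun q => lam (f.symm q) * |B q.val.1 q.val.2|)]
    exact Finset.sum_congr rfl fun k _ => by rw [Equiv.symm_apply_apply]
  rw [step2]
  exact sum_le_slope lam B f

lemma dualCert_trace_eq (hTs : T.IsSymm)
    (hf : slopeNormMat lam T = ∑ k, lam k * |T (f k).val.1 (f k).val.2|) :
    ((dualCert lam T f) * T).trace = slopeNormMat lam T := by
  rw [dualCert_trace lam T hTs, hf]
  rw [← Equiv.sum_comp f (fun q => lam (f.symm q) * (Real.sign (T q.val.1 q.val.2) * T q.val.1 q.val.2))]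
  refine Finset.sum_congr rfl fun k _ => ?_
  rw [Equiv.symm_apply_apply, sign_mul_self_eq]

lemma quad_pair (A : Matrix (Fin p) (Fin p) ℝ) (i j : Fin p) (a b : ℝ) :
    (Pi.single i a + Pi.single j b) ⬝ᵥ (A *ᵥ (Pi.single i a + Pi.single j b))
      = a * (A i i * a + A i j * b) + b * (A j i * a + A j j * b) := by
  rw [Matrix.mulVec_add, add_dotProduct, single_dotProduct,
    single_dotProduct, Matrix.mulVec_single, Matrix.mulVec_single]
  simp only [Pi.add_apply, Pi.smul_apply, Matrix.col_apply, op_smul_eq_mul]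

lemma quad_single (A : Matrix (Fin p) (Fin p) ℝ) (i : Fin p) (a : ℝ) :
    (Pi.single i a) ⬝ᵥ (A *ᵥ Pi.single i a) = a * (A i i * a) := by
  rw [single_dotProduct, Matrix.mulVec_single]
  simp only [Pi.smul_apply, Matrix.col_apply, op_smul_eq_mul]

end GslopeAux

open GslopeAux

/-- for symmetric positive definite `S` and `λ_1 ≥ ⋯ ≥ λ_m > 0` with
`m = p(p−1)/2`, the Gslope primal optimal value and the dual optimal value satisfy
`sup { logdet Θ − tr(Θ S) − J_λ(Θ) : Θ symm. pos. def. }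
  = −p − sup { logdet W : W symm. pos. def., J^D_λ(W − S) ≤ 1 }`. -/
theorem gslope_duality {p : ℕ}
    (S : Matrix (Fin p) (Fin p) ℝ) (hSsymm : S.IsSymm) (hSpd : S.PosDef)
    (lam : Fin (p * (p - 1) / 2) → ℝ) (hmono : Antitone lam) (hpos : ∀ k, 0 < lam k) :
    sSup {v : ℝ | ∃ Θ : Matrix (Fin p) (Fin p) ℝ, Θ.IsSymm ∧ Θ.PosDef ∧
        v = Real.log Θ.det - (Θ * S).trace - slopeNormMat lam Θ}
      = -(p : ℝ) - sSup {v : ℝ | ∃ W : Matrix (Fin p) (Fin p) ℝ, W.IsSymm ∧ W.PosDef ∧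
          slopeDualNorm lam (W - S) ≤ 1 ∧ v = Real.log W.det} := by
  classical
  -- the relaxed dual feasible set
  set K : Set (Matrix (Fin p) (Fin p) ℝ) :=
    {W | W.IsSymm ∧ W.PosSemidef ∧ ∀ T : Matrix (Fin p) (Fin p) ℝ, T.IsSymm →
      slopeNormMat lam T ≤ 1 → ((W - S) * T).trace ≤ 1} with hKdef
  have hSK : S ∈ K := by
    refine ⟨hSsymm, hSpd.posSemidef, fun T hTs hT1 => ?_⟩
    rw [sub_self, Matrix.zero_mul, Matrix.trace_zero]
    norm_num
  have hSdiag : ∀ i, 0 < S i i := by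
    intro i
    have hx : (Pi.single i 1 : Fin p → ℝ) ≠ 0 := by
      intro h
      have := congrFun h i
      simp at this
    have h2 := hSpd.dotProduct_mulVec_pos hx
    rw [show star (Pi.single i 1 : Fin p → ℝ) = Pi.single i 1 by simp, quad_single] at h2
    linarith
  set C : ℝ := ∑ k, S k k with hC
  have hSdiagC : ∀ i, S i i ≤ C := by
    intro i
    exact Finset.single_le_sum (f := fun k => S k k) (fun k _ => (hSdiag k).le)
      (Finset.mem_univ i)
  have hdiagK : ∀ W ∈ K, ∀ i, W i i = S i i := by
    intro W hW i
    by_contra hne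
    set u : ℝ := W i i - S i i with hu
    have hu0 : u ≠ 0 := sub_ne_zero_of_ne hne
    have hJ : slopeNormMat lam (Matrix.diagonal (Pi.single i (2 / u))) ≤ 1 := by
      rw [slope_eq_zero lam _ (fun i' j' h => Matrix.diagonal_apply_ne _ (ne_of_lt h))]
      norm_num
    have hkey := hW.2.2 (Matrix.diagonal (Pi.single i (2 / u)))
      (Matrix.isSymm_diagonal _) hJ
    rw [trace_mul_diag_single] at hkey
    have h3 : (W - S) i i = u := by rw [Matrix.sub_apply, hu]
    rw [h3, mul_comm, div_mul_cancel₀ _ hu0] at hkey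
    norm_num at hkey
  have hboundK : ∀ W ∈ K, ∀ i j, W i j ∈ Set.Icc (-C) C := by
    intro W hW i j
    rw [Set.mem_Icc]
    rcases eq_or_ne i j with rfl | hij
    · rw [hdiagK W hW i]
      constructor
      · linarith [hSdiag i, hSdiagC i, Finset.sum_nonneg
          (fun k (_ : k ∈ Finset.univ) => (hSdiag k).le)]
      · exact hSdiagC i
    · have hsymmW : W j i = W i j := hW.1.apply i j
      have hq : ∀ b : ℝ, 0 ≤ W i i + b * W i j + b * W j i + b * (W j j * b) := by
        intro b
        have hx : (Pi.single i 1 + Pi.single j b : Fin p → ℝ) ≠ 0 := by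
          intro h
          have := congrFun h i
          simp [Pi.single_apply, hij, Ne.symm hij] at this
        have h2 := hW.2.1.dotProduct_mulVec_nonneg (Pi.single i 1 + Pi.single j b)
        rw [show star (Pi.single i 1 + Pi.single j b : Fin p → ℝ)
          = Pi.single i 1 + Pi.single j b by simp, quad_pair] at h2
        nlinarith [h2]
      have h1 := hq 1
      have h2 := hq (-1)
      have hWii := hdiagK W hW i
      have hWjj := hdiagK W hW j
      constructor
      · nlinarith [hSdiagC i, hSdiagC j]
      · nlinarith [hSdiagC i, hSdiagC j]
  have hBcompact : IsCompact {W : Matrix (Fin p) (Fin p) ℝ | ∀ i j, W i j ∈ Set.Icc (-C) C} := by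
    have h2 : IsCompact (Set.pi Set.univ fun _ : Fin p =>
        (Set.pi Set.univ fun _ : Fin p => Set.Icc (-C) C : Set (Fin p → ℝ))) :=
      isCompact_univ_pi fun _ => isCompact_univ_pi fun _ => isCompact_Icc
    have hset : {W : Matrix (Fin p) (Fin p) ℝ | ∀ i j, W i j ∈ Set.Icc (-C) C}
        = Set.pi Set.univ fun _ : Fin p =>
            (Set.pi Set.univ fun _ : Fin p => Set.Icc (-C) C : Set (Fin p → ℝ)) := by
      ext W
      exact ⟨fun h i _ j _ => h i j, fun h i j => h i (Set.mem_univ i) j (Set.mem_univ j)⟩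
    rw [hset]
    exact h2
  have hKclosed : IsClosed K := by
    have h1 : IsClosed {W : Matrix (Fin p) (Fin p) ℝ | W.IsSymm} :=
      isClosed_eq (continuous_id.matrix_transpose) continuous_id
    have h2 : IsClosed {W : Matrix (Fin p) (Fin p) ℝ | W.PosSemidef} := by
      have hset : {W : Matrix (Fin p) (Fin p) ℝ | W.PosSemidef} =
          {W : Matrix (Fin p) (Fin p) ℝ | W.IsHermitian} ∩
            ⋂ x : Fin p → ℝ, {W : Matrix (Fin p) (Fin p) ℝ | 0 ≤ star x ⬝ᵥ (W *ᵥ x)} := by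
        ext W
        simp only [Set.mem_setOf_eq, Set.mem_inter_iff, Set.mem_iInter]
        exact Matrix.posSemidef_iff_dotProduct_mulVec
      rw [hset]
      refine (isClosed_eq (continuous_id.matrix_conjTranspose) continuous_id).inter
        (isClosed_iInter fun x => ?_)
      exact isClosed_le continuous_const
        (Continuous.dotProduct continuous_const
          (continuous_id.matrix_mulVec continuous_const))
    have h3 : IsClosed {W : Matrix (Fin p) (Fin p) ℝ | ∀ T : Matrix (Fin p) (Fin p) ℝ,
        T.IsSymm → slopeNormMat lam T ≤ 1 → ((W - S) * T).trace ≤ 1} := by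
      have hset : {W : Matrix (Fin p) (Fin p) ℝ | ∀ T : Matrix (Fin p) (Fin p) ℝ,
          T.IsSymm → slopeNormMat lam T ≤ 1 → ((W - S) * T).trace ≤ 1}
          = ⋂ T : Matrix (Fin p) (Fin p) ℝ, {W : Matrix (Fin p) (Fin p) ℝ |
              T.IsSymm → slopeNormMat lam T ≤ 1 → ((W - S) * T).trace ≤ 1} := by
        ext W
        simp [Set.mem_iInter]
      rw [hset]
      refine isClosed_iInter fun T => ?_
      by_cases hTs : T.IsSymm
      · by_cases hT1 : slopeNormMat lam T ≤ 1
        · have hset2 : {W : Matrix (Fin p) (Fin p) ℝ |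
              T.IsSymm → slopeNormMat lam T ≤ 1 → ((W - S) * T).trace ≤ 1}
              = {W : Matrix (Fin p) (Fin p) ℝ | ((W - S) * T).trace ≤ 1} := by
            ext W
            simp [hTs, hT1]
          rw [hset2]
          exact isClosed_le
            (Continuous.matrix_trace ((continuous_id.sub continuous_const).matrix_mul
              continuous_const)) continuous_const
        · have hset2 : {W : Matrix (Fin p) (Fin p) ℝ |
              T.IsSymm → slopeNormMat lam T ≤ 1 → ((W - S) * T).trace ≤ 1} = Set.univ := by
            ext W
            simp [hT1]
          rw [hset2]
          exact isClosed_univ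
      · have hset2 : {W : Matrix (Fin p) (Fin p) ℝ |
            T.IsSymm → slopeNormMat lam T ≤ 1 → ((W - S) * T).trace ≤ 1} = Set.univ := by
          ext W
          simp [hTs]
        rw [hset2]
        exact isClosed_univ
    have hKset : K = {W : Matrix (Fin p) (Fin p) ℝ | W.IsSymm}
        ∩ ({W : Matrix (Fin p) (Fin p) ℝ | W.PosSemidef}
          ∩ {W : Matrix (Fin p) (Fin p) ℝ | ∀ T : Matrix (Fin p) (Fin p) ℝ,
              T.IsSymm → slopeNormMat lam T ≤ 1 → ((W - S) * T).trace ≤ 1}) := by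
      ext W
      simp only [hKdef, Set.mem_setOf_eq, Set.mem_inter_iff]
    rw [hKset]
    exact h1.inter (h2.inter h3)
  have hKcompact : IsCompact K := hBcompact.of_isClosed_subset hKclosed hboundK
  obtain ⟨W0, hW0K, hW0max⟩ := hKcompact.exists_isMaxOn ⟨S, hSK⟩
    ((continuous_id.matrix_det).continuousOn)
  have hW0s : W0.IsSymm := hW0K.1
  have hdetS : S.det ≤ W0.det := hW0max hSK
  have hW0pd : W0.PosDef := posdef_of_psd_det hW0K.2.1
    (lt_of_lt_of_le hSpd.det_pos hdetS).ne'
  set Θ0 : Matrix (Fin p) (Fin p) ℝ := W0⁻¹ with hΘ0def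
  have hW0u : IsUnit W0.det := isUnit_iff_ne_zero.mpr hW0pd.det_pos.ne'
  have hΘ0s : Θ0.IsSymm := by
    rw [hΘ0def, Matrix.IsSymm, Matrix.transpose_nonsing_inv, hW0s.eq]
  have hΘ0pd : Θ0.PosDef := hW0pd.inv
  -- KKT inequality (easy direction)
  have hle : ((W0 - S) * Θ0).trace ≤ slopeNormMat lam Θ0 :=
    trace_le_slope lam Θ0 hpos hΘ0s hW0K.2.2
  -- KKT inequality (hard direction, via perturbation)
  have hge : slopeNormMat lam Θ0 ≤ ((W0 - S) * Θ0).trace := by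
    by_contra hlt
    push_neg at hlt
    obtain ⟨f, hf⟩ := exists_slope_eq lam Θ0
    set Uo := dualCert lam Θ0 f with hUo
    set M : Matrix (Fin p) (Fin p) ℝ := S + Uo - W0 with hM
    have hMs : M.IsSymm := (hSsymm.add (dualCert_symm lam)).sub hW0s
    have hUoΘ0 : (Uo * Θ0).trace = slopeNormMat lam Θ0 := dualCert_trace_eq lam hΘ0s hf
    have hMtrace : (Θ0 * M).trace = slopeNormMat lam Θ0 - ((W0 - S) * Θ0).trace := by
      have hMeq : M = Uo - (W0 - S) := by rw [hM]; abel
      rw [Matrix.trace_mul_comm, hMeq, Matrix.sub_mul, Matrix.trace_sub, hUoΘ0]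
    have hc : 0 < (Θ0 * M).trace := by rw [hMtrace]; linarith
    obtain ⟨δ, hδ0, hδ⟩ := posdef_perturb hW0pd hW0s M hMs
    set N : Matrix (Fin p) (Fin p) ℝ := W0⁻¹ * M with hN
    have hNtr : N.trace = (Θ0 * M).trace := by rw [hN, hΘ0def]
    set q : Polynomial ℝ :=
      (Matrix.det (1 + (Polynomial.X : Polynomial ℝ) • N.map Polynomial.C)).divX.divX
      with hqdef
    have hdetexp : ∀ t : ℝ, (1 + t • N).det = 1 + N.trace * t + q.eval t * t ^ 2 :=
      fun t => Matrix.det_one_add_smul t N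
    have hgcont : Continuous fun t : ℝ => N.trace + q.eval t * t :=
      continuous_const.add ((q.continuous).mul continuous_id)
    have hopen : IsOpen ((fun t : ℝ => N.trace + q.eval t * t) ⁻¹' Set.Ioi 0) :=
      isOpen_Ioi.preimage hgcont
    have h0mem : (0 : ℝ) ∈ (fun t : ℝ => N.trace + q.eval t * t) ⁻¹' Set.Ioi 0 := by
      simp only [Set.mem_preimage, Set.mem_Ioi]
      simpa using hNtr ▸ hc
    obtain ⟨δ1, hδ10, hball⟩ := Metric.isOpen_iff.mp hopen 0 h0mem
    set t0 : ℝ := min (min δ δ1) 1 / 2 with ht0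
    have hminpos : 0 < min (min δ δ1) 1 := lt_min (lt_min hδ0 hδ10) one_pos
    have htpos : 0 < t0 := by rw [ht0]; linarith
    have ht1 : t0 ≤ 1 := by
      have := min_le_right (min δ δ1) 1
      rw [ht0]; linarith
    have htδ : |t0| < δ := by
      rw [abs_of_pos htpos, ht0]
      have h1 := min_le_left (min δ δ1) 1
      have h2 := min_le_left δ δ1
      linarith
    have htδ1 : |t0| < δ1 := by
      rw [abs_of_pos htpos, ht0]
      have h1 := min_le_left (min δ δ1) 1
      have h2 := min_le_right δ δ1
      linarith
    set Wt : Matrix (Fin p) (Fin p) ℝ := W0 + t0 • M with hWt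
    have hWtpd : Wt.PosDef := hδ t0 htδ
    have hWtK : Wt ∈ K := by
      refine ⟨hW0s.add (hMs.smul t0), hWtpd.posSemidef, ?_⟩
      intro T hTs hT1
      have hdec : Wt - S = (1 - t0) • (W0 - S) + t0 • Uo := by
        rw [hWt, hM]
        ext i j
        simp only [Matrix.sub_apply, Matrix.add_apply, Matrix.smul_apply, smul_eq_mul]
        ring
      rw [hdec, Matrix.add_mul, Matrix.trace_add, Matrix.smul_mul, Matrix.smul_mul,
        Matrix.trace_smul, Matrix.trace_smul, smul_eq_mul, smul_eq_mul]
      have hx := hW0K.2.2 T hTs hT1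
      have hy := (dualCert_trace_le (T := Θ0) (f := f) lam hpos T hTs).trans hT1
      nlinarith
    have hgt0 : 0 < N.trace + q.eval t0 * t0 := by
      have hmem : t0 ∈ Metric.ball (0 : ℝ) δ1 := by
        rw [Metric.mem_ball, Real.dist_eq, sub_zero]
        exact htδ1
      exact hball hmem
    have hfactor : Wt.det = W0.det * (1 + t0 * (N.trace + q.eval t0 * t0)) := by
      have hid : Wt = W0 * (1 + t0 • N) := by
        rw [hWt, hN, Matrix.mul_add, Matrix.mul_one, Matrix.mul_smul,
          Matrix.mul_nonsing_inv_cancel_left _ _ hW0u]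
      rw [hid, Matrix.det_mul, hdetexp t0]
      ring
    have hgt : W0.det < Wt.det := by
      rw [hfactor]
      nlinarith [hW0pd.det_pos, mul_pos htpos hgt0]
    exact absurd (hW0max hWtK) (not_le.mpr hgt)
  have hKKT : ((W0 - S) * Θ0).trace = slopeNormMat lam Θ0 := le_antisymm hle hge
  -- trace of W0 * Θ0
  have htrp : (W0 * Θ0).trace = (p : ℝ) := by
    rw [hΘ0def, Matrix.mul_nonsing_inv _ hW0u, Matrix.trace_one]
    simp
  have hlogΘ0 : Real.log Θ0.det = -Real.log W0.det := by
    rw [hΘ0def, Matrix.det_nonsing_inv, Ring.inverse_eq_inv', Real.log_inv]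
  have htrS : (Θ0 * S).trace = (p : ℝ) - slopeNormMat lam Θ0 := by
    have h1 : ((W0 - S) * Θ0).trace = (W0 * Θ0).trace - (S * Θ0).trace := by
      rw [Matrix.sub_mul, Matrix.trace_sub]
    rw [Matrix.trace_mul_comm]
    rw [hKKT] at h1
    rw [htrp] at h1
    linarith
  -- dual supremum
  have hdual : sSup {v : ℝ | ∃ W : Matrix (Fin p) (Fin p) ℝ, W.IsSymm ∧ W.PosDef ∧
      slopeDualNorm lam (W - S) ≤ 1 ∧ v = Real.log W.det} = Real.log W0.det := by
    apply IsGreatest.csSup_eq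
    constructor
    · exact ⟨W0, hW0s, hW0pd, (dualNorm_le_one_iff lam (W0 - S)).mpr hW0K.2.2, rfl⟩
    · rintro v ⟨W, hWs, hWpd, hWd, rfl⟩
      have hWK : W ∈ K :=
        ⟨hWs, hWpd.posSemidef, (dualNorm_le_one_iff lam (W - S)).mp hWd⟩
      have := hW0max hWK
      exact Real.log_le_log hWpd.det_pos this
  -- primal supremum
  have hprimal : sSup {v : ℝ | ∃ Θ : Matrix (Fin p) (Fin p) ℝ, Θ.IsSymm ∧ Θ.PosDef ∧
      v = Real.log Θ.det - (Θ * S).trace - slopeNormMat lam Θ}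
      = -(p : ℝ) - Real.log W0.det := by
    apply IsGreatest.csSup_eq
    constructor
    · refine ⟨Θ0, hΘ0s, hΘ0pd, ?_⟩
      rw [hlogΘ0, htrS]
      ring
    · rintro v ⟨Θ, hΘs, hΘpd, rfl⟩
      have h1 := logdet_pair hΘpd hW0pd
      have h2 : ((W0 - S) * Θ).trace ≤ slopeNormMat lam Θ :=
        trace_le_slope lam Θ hpos hΘs hW0K.2.2
      have h3 : ((W0 - S) * Θ).trace = (Θ * W0).trace - (Θ * S).trace := by
        rw [Matrix.sub_mul, Matrix.trace_sub, Matrix.trace_mul_comm W0 Θ,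
          Matrix.trace_mul_comm S Θ]
      linarith
  rw [hprimal, hdual]
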